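/- In the men-proposing deferred acceptance algorithm with n men and n women, the total number of proposals made over the entire execution is at most n^2 - n + 1. -/

import Mathlib

open scoped Classical

noncomputable section

/-- A two-sided matching market with `n` men and `n` women, each with a complete
strict preference order over the other side. `mpref m k` is man `m`'s `k`-th
favourite woman (0 = top), and `wpref w k` is woman `w`'s `k`-th favourite man. -/
structure Profile (n : ℕ) where
  mpref : Fin n → (Fin n ≃ Fin n)
  wpref : Fin n → (Fin n ≃ Fin n)

namespace Profile

variable {n : ℕ}

/-- rank (0 = best) of woman `w` in man `m`'s preference list -/
def mrank (P : Profile n) (m w : Fin n) : ℕ := ((P.mpref m).symm w : ℕ)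

/-- rank (0 = best) of man `m` in woman `w`'s preference list -/
def wrank (P : Profile n) (w m : Fin n) : ℕ := ((P.wpref w).symm m : ℕ)

/-- man `m` strictly prefers woman `w` to woman `w'` -/
def mPrefers (P : Profile n) (m w w' : Fin n) : Prop := P.mrank m w < P.mrank m w'

/-- woman `w` strictly prefers man `m` to man `m'` -/
def wPrefers (P : Profile n) (w m m' : Fin n) : Prop := P.wrank w m < P.wrank w m'

/-- top choice of man `m` -/
def topM (P : Profile n) (m : Fin n) : Fin n := P.mpref m ⟨0, m.pos⟩

/-- top choice of woman `w` -/
def topW (P : Profile n) (w : Fin n) : Fin n := P.wpref w ⟨0, w.pos⟩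

/-- the profile with the roles of men and women exchanged -/
def swap (P : Profile n) : Profile n := ⟨P.wpref, P.mpref⟩

/-- State of the men-proposing deferred acceptance algorithm:
`next m` = number of proposals man `m` has made so far,
`held w` = the man woman `w` currently tentatively holds (if any). -/
structure DAState (n : ℕ) where
  next : Fin n → ℕ
  held : Fin n → Option (Fin n)

def initState (n : ℕ) : DAState n := ⟨fun _ => 0, fun _ => none⟩

/-- the men currently unmatched (held by no woman) -/
def unmatched (s : DAState n) : Finset (Fin n) :=
  Finset.univ.filter fun m => ∀ w : Fin n, s.held w ≠ some m

/-- the woman man `m` proposes to next: his most preferred woman among those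
who have not rejected him yet -/
def target (P : Profile n) (s : DAState n) (m : Fin n) : Fin n :=
  P.mpref m ⟨s.next m % n, Nat.mod_lt _ m.pos⟩

/-- the men proposing to woman `w` in the current round -/
def proposers (P : Profile n) (s : DAState n) (w : Fin n) : Finset (Fin n) :=
  (unmatched s).filter fun m => target P s m = w

/-- one round of the men-proposing deferred acceptance algorithm: every
unmatched man proposes to his favourite woman who has not rejected him yet,
and every woman tentatively holds her favourite among her current partner
and the new proposers, rejecting the rest -/
def step (P : Profile n) (s : DAState n) : DAState n where
  next := fun m => if m ∈ unmatched s then s.next m + 1 else s.next m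
  held := fun w => ((proposers P s w ∪ (s.held w).toFinset).toList).argmin (P.wrank w)

/-- the state after `k` rounds of men-proposing deferred acceptance -/
def stateAt (P : Profile n) (k : ℕ) : DAState n := (step P)^[k] (initState n)

/-- the final state of men-proposing deferred acceptance
(`n * n + 1` iterations is always enough to reach the fixed point) -/
def finalState (P : Profile n) : DAState n := stateAt P (n * n + 1)

/-- total number of proposals made during the men-proposing DA -/
def totalProposals (P : Profile n) : ℕ := ∑ m : Fin n, (finalState P).next m

/-- number of rounds of the men-proposing DA (rounds in which some proposal is made) -/
def rounds (P : Profile n) : ℕ :=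
  ((Finset.range (n * n + 1)).filter fun k => (unmatched (stateAt P k)).Nonempty).card

/-- total number of proposals received by woman `w` during the men-proposing DA -/
def proposalsTo (P : Profile n) (w : Fin n) : ℕ :=
  ∑ k ∈ Finset.range (n * n + 1), (proposers P (stateAt P k) w).card

/-- man `m` proposes to woman `w` at some point during the men-proposing DA -/
def proposedTo (P : Profile n) (m w : Fin n) : Prop :=
  ∃ k < n * n + 1, m ∈ proposers P (stateAt P k) w

/-- the men-proposing DA makes the maximum possible number `n² - n + 1` of proposals -/
def MaxProp (P : Profile n) : Prop := P.totalProposals = n * n + 1 - n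

/-- the men-proposing DA takes the maximum possible number `n² - 2n + 2` of rounds -/
def MaxRou (P : Profile n) : Prop := P.rounds = n * n + 2 - 2 * n

/-- a matching (a bijection man ↦ woman) is stable iff no man-woman pair mutually
prefer each other to their assigned partners -/
def Stable (P : Profile n) (μ : Fin n ≃ Fin n) : Prop :=
  ¬ ∃ (m w : Fin n), P.mPrefers m w (μ m) ∧ P.wPrefers w m (μ.symm w)

/-- the profile admits a unique stable matching -/
def USM (P : Profile n) : Prop := ∃! μ : Fin n ≃ Fin n, P.Stable μ

/-- the sequential preference condition of Eeckhout (2000) -/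
def SPC (P : Profile n) : Prop :=
  ∃ σ τ : Equiv.Perm (Fin n), ∀ i j : Fin n, i < j →
    P.mPrefers (σ i) (τ i) (τ j) ∧ P.wPrefers (τ i) (σ i) (σ j)

/-- the no crossing condition of Clark (2006) -/
def NCC (P : Profile n) : Prop :=
  ∃ σ τ : Equiv.Perm (Fin n), ∀ i j k l : Fin n, i < j → k < l →
    (P.mPrefers (σ i) (τ l) (τ k) → P.mPrefers (σ j) (τ l) (τ k)) ∧
    (P.wPrefers (τ k) (σ j) (σ i) → P.wPrefers (τ l) (σ j) (σ i))

/-! ### Auxiliary lemmas for the proposal bound -/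

lemma mem_unmatched_iff {s : DAState n} {m : Fin n} :
    m ∈ unmatched s ↔ ∀ w, s.held w ≠ some m := by
  simp [unmatched]

lemma mem_proposers_iff {P : Profile n} {s : DAState n} {w m : Fin n} :
    m ∈ proposers P s w ↔ m ∈ unmatched s ∧ target P s m = w := by
  simp [proposers]

lemma held_step_cases {P : Profile n} {s : DAState n} {w m : Fin n}
    (h : (step P s).held w = some m) :
    m ∈ proposers P s w ∨ s.held w = some m := by
  have hm : m ∈ (proposers P s w ∪ (s.held w).toFinset).toList :=
    List.argmin_mem (f := P.wrank w) (by exact h)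
  rw [Finset.mem_toList, Finset.mem_union, Option.mem_toFinset] at hm
  exact hm

lemma step_held_ne_none {P : Profile n} {s : DAState n} {w : Fin n}
    (h : (proposers P s w ∪ (s.held w).toFinset).Nonempty) :
    (step P s).held w ≠ none := by
  intro hc
  have : (proposers P s w ∪ (s.held w).toFinset).toList = [] :=
    List.argmin_eq_none.mp hc
  rw [Finset.toList_eq_nil] at this
  rw [this] at h
  exact Finset.not_nonempty_empty h

lemma step_held_ne_none_of_held {P : Profile n} {s : DAState n} {w : Fin n}
    (h : s.held w ≠ none) : (step P s).held w ≠ none := by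
  obtain ⟨a, ha⟩ := Option.ne_none_iff_exists'.mp h
  exact step_held_ne_none ⟨a, Finset.mem_union_right _ (by simp [ha])⟩

lemma step_held_ne_none_of_proposer {P : Profile n} {s : DAState n} {w m : Fin n}
    (h : m ∈ proposers P s w) : (step P s).held w ≠ none :=
  step_held_ne_none ⟨m, Finset.mem_union_left _ h⟩

/-- The invariant maintained by the DA algorithm: held is injective, every man
has made at most `n` proposals, and every woman a man has already proposed to
currently holds somebody. -/
def Inv (P : Profile n) (s : DAState n) : Prop :=
  (∀ w w' m, s.held w = some m → s.held w' = some m → w = w') ∧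
  (∀ m, s.next m ≤ n) ∧
  (∀ m : Fin n, ∀ i : Fin n, (i : ℕ) < s.next m → s.held (P.mpref m i) ≠ none)

lemma unmatched_empty_of_all_held {s : DAState n}
    (hinj : ∀ w w' m, s.held w = some m → s.held w' = some m → w = w')
    (hall : ∀ w, s.held w ≠ none) : unmatched s = ∅ := by
  classical
  have hw : ∀ w, ∃ m, s.held w = some m := fun w => Option.ne_none_iff_exists'.mp (hall w)
  choose f hf using hw
  have hinj' : Function.Injective f := fun w w' h =>
    hinj w w' (f w) (hf w) (h ▸ hf w')
  have hsurj : Function.Surjective f := Finite.injective_iff_surjective.mp hinj'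
  rw [Finset.eq_empty_iff_forall_notMem]
  intro m hm
  obtain ⟨w, hw⟩ := hsurj m
  exact (mem_unmatched_iff.mp hm) w (hw ▸ hf w)

lemma all_held_of_next_eq {P : Profile n} {s : DAState n}
    (hInv : Inv P s) {m : Fin n} (hm : s.next m = n) : ∀ w, s.held w ≠ none := by
  intro w
  have hi : (((P.mpref m).symm w : Fin n) : ℕ) < s.next m := by
    rw [hm]; exact ((P.mpref m).symm w).isLt
  have := hInv.2.2 m ((P.mpref m).symm w) hi
  rwa [Equiv.apply_symm_apply] at this

lemma next_lt_of_unmatched {P : Profile n} {s : DAState n}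
    (hInv : Inv P s) {m : Fin n} (hm : m ∈ unmatched s) : s.next m < n := by
  rcases lt_or_eq_of_le (hInv.2.1 m) with h | h
  · exact h
  · exfalso
    have := unmatched_empty_of_all_held hInv.1 (all_held_of_next_eq hInv h)
    rw [this] at hm
    exact Finset.notMem_empty m hm

lemma target_eq_of_lt {P : Profile n} {s : DAState n} {m : Fin n}
    (h : s.next m < n) : target P s m = P.mpref m ⟨s.next m, h⟩ := by
  unfold target
  congr 1
  exact Fin.ext (Nat.mod_eq_of_lt h)

/-- Two distinct unmatched men cannot both be about to make their very last
proposal. -/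
lemma not_two_last {P : Profile n} {s : DAState n} (hInv : Inv P s)
    {m₁ m₂ : Fin n} (h12 : m₁ ≠ m₂)
    (h1 : m₁ ∈ unmatched s) (h2 : m₂ ∈ unmatched s)
    (e1 : s.next m₁ + 1 = n) (e2 : s.next m₂ + 1 = n) : False := by
  classical
  obtain ⟨hinj, hle, hheld⟩ := hInv
  have hn2 : 2 ≤ n := by
    have h1n : (1 : ℕ) < Fintype.card (Fin n) :=
      Fintype.one_lt_card_iff_nontrivial.mpr ⟨⟨m₁, m₂, h12⟩⟩
    simp at h1n; omega
  set W₁ : Fin n := P.mpref m₁ ⟨s.next m₁, by omega⟩ with hW₁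
  set W₂ : Fin n := P.mpref m₂ ⟨s.next m₂, by omega⟩ with hW₂
  have key : ∀ (m : Fin n) (W : Fin n), s.next m + 1 = n →
      ((P.mpref m).symm W : ℕ) = s.next m →
      ∀ w, w ≠ W → s.held w ≠ none := by
    intro m W em eW w hw
    have hvne : ((P.mpref m).symm w : ℕ) ≠ s.next m := by
      intro h
      apply hw
      have h2 : (P.mpref m).symm w = (P.mpref m).symm W := Fin.ext (by rw [h, eW])
      have := congrArg (P.mpref m) h2
      rwa [Equiv.apply_symm_apply, Equiv.apply_symm_apply] at this
    have hvlt : ((P.mpref m).symm w : ℕ) < s.next m := by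
      have := ((P.mpref m).symm w).isLt
      omega
    have := hheld m ((P.mpref m).symm w) hvlt
    rwa [Equiv.apply_symm_apply] at this
  by_cases hW : W₁ = W₂
  · -- counting argument
    set f : Fin n → Fin n := fun w => (s.held w).getD m₁ with hfdef
    have hfw : ∀ w, w ≠ W₁ → s.held w = some (f w) := by
      intro w hw
      obtain ⟨a, ha⟩ := Option.ne_none_iff_exists'.mp (key m₁ W₁ e1 (by rw [hW₁, Equiv.symm_apply_apply]) w hw)
      simp [hfdef, ha]
    have hcard := Finset.card_le_card_of_injOn f
      (s := Finset.univ.erase W₁) (t := Finset.univ \ {m₁, m₂})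
      (by
        intro w hw
        have hwne : w ≠ W₁ := (Finset.mem_erase.mp hw).1
        have hsome := hfw w hwne
        have hne1 : f w ≠ m₁ := by
          intro h; exact (mem_unmatched_iff.mp h1) w (h ▸ hsome)
        have hne2 : f w ≠ m₂ := by
          intro h; exact (mem_unmatched_iff.mp h2) w (h ▸ hsome)
        simp [hne1, hne2]
      )
      (by
        intro w hw w' hw' hff
        have hwne : w ≠ W₁ := (Finset.mem_erase.mp hw).1
        have hwne' : w' ≠ W₁ := (Finset.mem_erase.mp hw').1
        exact hinj w w' (f w) (hfw w hwne) (hff ▸ hfw w' hwne')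
      )
    rw [Finset.card_erase_of_mem (Finset.mem_univ _), Finset.card_sdiff_of_subset (by simp)] at hcard
    simp only [Finset.card_univ, Fintype.card_fin] at hcard
    rw [Finset.card_insert_of_notMem (by simp [h12]), Finset.card_singleton] at hcard
    omega
  · -- all women hold somebody, contradiction with m₁ unmatched
    have hall : ∀ w, s.held w ≠ none := by
      intro w
      by_cases hw1 : w = W₁
      · exact key m₂ W₂ e2 (by rw [hW₂, Equiv.symm_apply_apply]) w (by rw [hw1]; exact hW)
      · exact key m₁ W₁ e1 (by rw [hW₁, Equiv.symm_apply_apply]) w hw1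
    have := unmatched_empty_of_all_held hinj hall
    rw [this] at h1
    exact Finset.notMem_empty m₁ h1

lemma inv_step {P : Profile n} {s : DAState n} (hInv : Inv P s) : Inv P (step P s) := by
  obtain ⟨hinj, hle, hheld⟩ := hInv
  refine ⟨?_, ?_, ?_⟩
  · intro w w' m hw hw'
    rcases held_step_cases hw with hp | ho
    · rcases held_step_cases hw' with hp' | ho'
      · rw [← (mem_proposers_iff.mp hp).2, ← (mem_proposers_iff.mp hp').2]
      · exact absurd ho' (mem_unmatched_iff.mp (mem_proposers_iff.mp hp).1 w')
    · rcases held_step_cases hw' with hp' | ho'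
      · exact absurd ho (mem_unmatched_iff.mp (mem_proposers_iff.mp hp').1 w)
      · exact hinj w w' m ho ho'
  · intro m
    by_cases hm : m ∈ unmatched s
    · have := next_lt_of_unmatched ⟨hinj, hle, hheld⟩ hm
      simp only [step, hm, if_true]
      omega
    · simp only [step, hm, if_false]
      exact hle m
  · intro m i hi
    by_cases hm : m ∈ unmatched s
    · simp only [step, hm, if_true] at hi
      rcases Nat.lt_or_ge (i : ℕ) (s.next m) with hlt | hge
      · exact step_held_ne_none_of_held (hheld m i hlt)
      · have hieq : (i : ℕ) = s.next m := by omega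
        have hlt : s.next m < n := next_lt_of_unmatched ⟨hinj, hle, hheld⟩ hm
        have htgt : target P s m = P.mpref m i := by
          rw [target_eq_of_lt hlt]
          congr 1
          exact Fin.ext hieq.symm
        have hp : m ∈ proposers P s (P.mpref m i) :=
          mem_proposers_iff.mpr ⟨hm, htgt⟩
        exact step_held_ne_none_of_proposer hp
    · simp only [step, hm, if_false] at hi
      exact step_held_ne_none_of_held (hheld m i hi)

lemma card_last_step {P : Profile n} {s : DAState n} (hInv : Inv P s)
    (h : (Finset.univ.filter fun m => s.next m = n).card ≤ 1) :
    (Finset.univ.filter fun m => (step P s).next m = n).card ≤ 1 := by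
  classical
  by_cases hA : ∃ m₀, s.next m₀ = n
  · obtain ⟨m₀, hm₀⟩ := hA
    have hemp := unmatched_empty_of_all_held hInv.1 (all_held_of_next_eq hInv hm₀)
    have hnext : ∀ m, (step P s).next m = s.next m := by
      intro m
      simp [step, hemp]
    simpa [hnext] using h
  · push_neg at hA
    rw [Finset.card_le_one]
    intro a ha b hb
    rw [Finset.mem_filter] at ha hb
    replace ha := ha.2
    replace hb := hb.2
    simp only [step] at ha hb
    by_contra hne
    split_ifs at ha with ha1
    · split_ifs at hb with hb1
      · exact not_two_last hInv hne ha1 hb1 ha hb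
      · exact hA b hb
    · exact hA a ha

lemma inv_stateAt (P : Profile n) (k : ℕ) :
    Inv P (stateAt P k) ∧
    (Finset.univ.filter fun m => (stateAt P k).next m = n).card ≤ 1 := by
  induction k with
  | zero =>
    constructor
    · refine ⟨?_, ?_, ?_⟩
      · intro w w' m hw _
        simp [stateAt, initState] at hw
      · intro m
        simp [stateAt, initState]
      · intro m i hi
        simp [stateAt, initState] at hi
    · rw [Finset.card_le_one]
      intro a ha b hb
      rw [Finset.mem_filter] at ha
      exfalso
      have : (0 : ℕ) = n := by simpa [stateAt, initState] using ha.2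
      have := a.isLt
      omega
  | succ k ih =>
    have hst : stateAt P (k + 1) = step P (stateAt P k) := by
      unfold stateAt
      rw [Function.iterate_succ_apply']
    rw [hst]
    exact ⟨inv_step ih.1, card_last_step ih.1 ih.2⟩

end Profile

/-- The men-proposing DA makes at most `n² - n + 1` proposals in total. -/
theorem da_totalProposals_le (n : ℕ) (P : Profile n) :
    P.totalProposals ≤ n * n + 1 - n := by
  classical
  rcases Nat.eq_zero_or_pos n with rfl | hn
  · simp [Profile.totalProposals]
  obtain ⟨hInv, hcard⟩ := Profile.inv_stateAt P (n * n + 1)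
  set s := Profile.stateAt P (n * n + 1) with hs
  have htot : P.totalProposals = ∑ m : Fin n, s.next m := rfl
  set A := Finset.univ.filter fun m => s.next m = n with hA
  rcases Finset.card_le_one_iff_subsingleton_coe.mp hcard with _
  have hbound : ∀ m : Fin n, m ∉ A → s.next m ≤ n - 1 := by
    intro m hm
    have h1 : s.next m ≤ n := hInv.2.1 m
    have h2 : s.next m ≠ n := by
      intro h
      exact hm (Finset.mem_filter.mpr ⟨Finset.mem_univ _, h⟩)
    omega
  rcases Finset.eq_empty_or_nonempty A with hAe | hAne
  · -- no man made n proposals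
    have : ∀ m ∈ (Finset.univ : Finset (Fin n)), s.next m ≤ n - 1 := by
      intro m _
      exact hbound m (by rw [hAe]; exact Finset.notMem_empty m)
    have hsum := Finset.sum_le_card_nsmul Finset.univ (fun m => s.next m) (n - 1) this
    rw [htot]
    calc ∑ m : Fin n, s.next m ≤ Finset.univ.card • (n - 1) := hsum
      _ = n * (n - 1) := by simp [Finset.card_univ, mul_comm]
      _ ≤ n * n + 1 - n := by
          obtain ⟨k, rfl⟩ := Nat.exists_eq_add_of_le hn
          have hq : (k + 1) * (k + 1) = k * k + 2 * k + 1 := by ring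
          have hq2 : (1 + k) * (1 + k - 1) = k * k + k := by
            simp [Nat.add_sub_cancel]
            ring
          rw [add_comm 1 k] at hq2 ⊢
          rw [hq, hq2]
          generalize k * k = K
          omega
  · -- exactly one man made n proposals
    obtain ⟨a, ha⟩ := hAne
    have hAa : A = {a} := by
      apply Finset.eq_singleton_iff_unique_mem.mpr
      exact ⟨ha, fun b hb => Finset.card_le_one.mp hcard b hb a ha⟩
    have hna : s.next a = n := (Finset.mem_filter.mp ha).2
    have hsplit : ∑ m : Fin n, s.next m = s.next a + ∑ m ∈ Finset.univ.erase a, s.next m :=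
      (Finset.add_sum_erase Finset.univ (fun m => s.next m) (Finset.mem_univ a)).symm
    have herase : ∀ m ∈ Finset.univ.erase a, s.next m ≤ n - 1 := by
      intro m hm
      apply hbound
      rw [hAa, Finset.mem_singleton]
      exact (Finset.mem_erase.mp hm).1
    have hsum := Finset.sum_le_card_nsmul (Finset.univ.erase a) (fun m => s.next m)
      (n - 1) herase
    rw [Finset.card_erase_of_mem (Finset.mem_univ a), Finset.card_univ,
      Fintype.card_fin] at hsum
    rw [htot, hsplit, hna]
    have : (n - 1) • (n - 1) = (n - 1) * (n - 1) := by simp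
    rw [this] at hsum
    calc n + ∑ m ∈ Finset.univ.erase a, s.next m ≤ n + (n - 1) * (n - 1) := by omega
      _ ≤ n * n + 1 - n := by
          obtain ⟨k, rfl⟩ := Nat.exists_eq_add_of_le hn
          rw [add_comm 1 k]
          have hq : (k + 1) * (k + 1) = k * k + 2 * k + 1 := by ring
          have hq2 : (k + 1 - 1) * (k + 1 - 1) = k * k := by simp
          rw [hq, hq2]
          generalize k * k = K
          omega
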